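/- (Conjugation symmetry of the distorted Fourier transform) Fix ω > 0 and let F = (f, conj(f))ᵀ for a Schwartz function f : ℝ → ℂ. Then for every ξ ∈ ℝ, ⟨F, σ₃ Ψ_{+,ω}(·,ξ)⟩ = - ((|ξ| - i√ω)²/(|ξ| + i√ω)²) · conj( ⟨F, σ₃ Ψ_{-,ω}(·,-ξ)⟩ ). -/
import Mathlib


open MeasureTheory

/-- First component of the distorted Fourier basis. -/
noncomputable def Psi1 (ω : ℝ) (x ξ : ℝ) : ℂ :=
  ((1 / Real.sqrt (2 * Real.pi) : ℝ) : ℂ) *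
    (((ξ : ℂ) + Complex.I * (Real.sqrt ω : ℂ) * (Real.tanh (Real.sqrt ω * x) : ℂ)) ^ 2 /
      (((|ξ| : ℝ) : ℂ) - Complex.I * (Real.sqrt ω : ℂ)) ^ 2) *
    Complex.exp (Complex.I * (x : ℂ) * (ξ : ℂ))

/-- Second component of the distorted Fourier basis. -/
noncomputable def Psi2 (ω : ℝ) (x ξ : ℝ) : ℂ :=
  ((1 / Real.sqrt (2 * Real.pi) : ℝ) : ℂ) *
    (((ω * (1 / Real.cosh (Real.sqrt ω * x)) ^ 2 : ℝ) : ℂ) /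
      (((|ξ| : ℝ) : ℂ) - Complex.I * (Real.sqrt ω : ℂ)) ^ 2) *
    Complex.exp (Complex.I * (x : ℂ) * (ξ : ℂ))

/-- ⟨F, σ₃Ψ_{+,ω}(·,ξ)⟩ for F = (f, conj f)ᵀ. -/
noncomputable def dFTplus (ω : ℝ) (f : ℝ → ℂ) (ξ : ℝ) : ℂ :=
  ∫ x : ℝ, (f x * (starRingEnd ℂ) (Psi1 ω x ξ)
    - (starRingEnd ℂ) (f x) * (starRingEnd ℂ) (Psi2 ω x ξ))

/-- ⟨F, σ₃Ψ_{-,ω}(·,ξ)⟩ for F = (f, conj f)ᵀ. -/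
noncomputable def dFTminus (ω : ℝ) (f : ℝ → ℂ) (ξ : ℝ) : ℂ :=
  ∫ x : ℝ, (f x * (starRingEnd ℂ) (Psi2 ω x ξ)
    - (starRingEnd ℂ) (f x) * (starRingEnd ℂ) (Psi1 ω x ξ))

/-- Auxiliary cancellation identity. -/
lemma cancel_aux (A B K M E : ℂ) (hA : A ≠ 0) :
    A ^ 2 / B ^ 2 * (K * (M / A ^ 2) * E) = K * (M / B ^ 2) * E := by
  have h : A ^ 2 ≠ 0 := pow_ne_zero _ hA
  rw [div_mul_eq_mul_div, mul_comm (A ^ 2), mul_assoc, mul_assoc, div_mul_eq_mul_div,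
    mul_div_assoc, mul_div_assoc, mul_div_cancel_right₀ _ h]
  ring

lemma conjPsi1 (ω : ℝ) (hω : 0 < ω) (x ξ : ℝ) :
    (starRingEnd ℂ) (Psi1 ω x ξ)
      = ((((|ξ| : ℝ) : ℂ) - Complex.I * (Real.sqrt ω : ℂ)) ^ 2 /
          ((((|ξ| : ℝ) : ℂ) + Complex.I * (Real.sqrt ω : ℂ)) ^ 2)) * Psi1 ω x (-ξ) := by
  have hs : (0:ℝ) < Real.sqrt ω := Real.sqrt_pos.mpr hω
  have ha : (((|ξ| : ℝ) : ℂ) - Complex.I * (Real.sqrt ω : ℂ)) ≠ 0 := by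
    intro h; have := congrArg Complex.im h; simp at this; linarith
  have hexp : (starRingEnd ℂ) (Complex.exp (Complex.I * (x : ℂ) * (ξ : ℂ)))
      = Complex.exp (Complex.I * (x : ℂ) * ((-ξ : ℝ) : ℂ)) := by
    rw [← Complex.exp_conj]; congr 1
    simp only [map_mul, Complex.conj_I, Complex.conj_ofReal]; push_cast; ring
  unfold Psi1
  rw [map_mul, map_mul, hexp]
  simp only [map_div₀, map_pow, map_add, map_sub, map_mul, Complex.conj_ofReal,
    Complex.conj_I, abs_neg]
  push_cast
  rw [show ((|ξ| : ℝ) : ℂ) - -Complex.I * (Real.sqrt ω : ℂ)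
      = ((|ξ| : ℝ) : ℂ) + Complex.I * (Real.sqrt ω : ℂ) from by ring]
  set A : ℂ := ((|ξ| : ℝ) : ℂ) - Complex.I * (Real.sqrt ω : ℂ) with hA
  set B : ℂ := ((|ξ| : ℝ) : ℂ) + Complex.I * (Real.sqrt ω : ℂ) with hB
  clear_value A B
  clear hA hB
  rw [cancel_aux _ _ _ _ _ ha]
  ring

lemma conjPsi2 (ω : ℝ) (hω : 0 < ω) (x ξ : ℝ) :
    (starRingEnd ℂ) (Psi2 ω x ξ)
      = ((((|ξ| : ℝ) : ℂ) - Complex.I * (Real.sqrt ω : ℂ)) ^ 2 /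
          ((((|ξ| : ℝ) : ℂ) + Complex.I * (Real.sqrt ω : ℂ)) ^ 2)) * Psi2 ω x (-ξ) := by
  have hs : (0:ℝ) < Real.sqrt ω := Real.sqrt_pos.mpr hω
  have ha : (((|ξ| : ℝ) : ℂ) - Complex.I * (Real.sqrt ω : ℂ)) ≠ 0 := by
    intro h; have := congrArg Complex.im h; simp at this; linarith
  have hexp : (starRingEnd ℂ) (Complex.exp (Complex.I * (x : ℂ) * (ξ : ℂ)))
      = Complex.exp (Complex.I * (x : ℂ) * ((-ξ : ℝ) : ℂ)) := by
    rw [← Complex.exp_conj]; congr 1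
    simp only [map_mul, Complex.conj_I, Complex.conj_ofReal]; push_cast; ring
  unfold Psi2
  rw [map_mul, map_mul, hexp]
  simp only [map_div₀, map_pow, map_add, map_sub, map_mul, Complex.conj_ofReal,
    Complex.conj_I, abs_neg]
  push_cast
  rw [show ((|ξ| : ℝ) : ℂ) - -Complex.I * (Real.sqrt ω : ℂ)
      = ((|ξ| : ℝ) : ℂ) + Complex.I * (Real.sqrt ω : ℂ) from by ring]
  set A : ℂ := ((|ξ| : ℝ) : ℂ) - Complex.I * (Real.sqrt ω : ℂ) with hA
  set B : ℂ := ((|ξ| : ℝ) : ℂ) + Complex.I * (Real.sqrt ω : ℂ) with hB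
  clear_value A B
  clear hA hB
  rw [cancel_aux _ _ _ _ _ ha]

/-- Conjugation symmetry of the distorted Fourier transform for J-invariant data
F = (f, conj f)ᵀ with f Schwartz. -/
theorem distorted_fourier_conjugation_symmetry (ω : ℝ) (hω : 0 < ω)
    (f : SchwartzMap ℝ ℂ) (ξ : ℝ) :
    dFTplus ω (fun x => f x) ξ
      = -(((((|ξ| : ℝ) : ℂ) - Complex.I * (Real.sqrt ω : ℂ)) ^ 2 /
            ((((|ξ| : ℝ) : ℂ) + Complex.I * (Real.sqrt ω : ℂ)) ^ 2)) *
          (starRingEnd ℂ) (dFTminus ω (fun x => f x) (-ξ))) := by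
  set c : ℂ := ((((|ξ| : ℝ) : ℂ) - Complex.I * (Real.sqrt ω : ℂ)) ^ 2 /
      ((((|ξ| : ℝ) : ℂ) + Complex.I * (Real.sqrt ω : ℂ)) ^ 2)) with hc
  have hL : dFTplus ω (fun x => f x) ξ
      = c * ∫ x : ℝ, (f x * Psi1 ω x (-ξ) - (starRingEnd ℂ) (f x) * Psi2 ω x (-ξ)) := by
    rw [dFTplus, ← integral_const_mul]
    apply integral_congr_ae
    filter_upwards with x
    rw [conjPsi1 ω hω, conjPsi2 ω hω, ← hc]
    ring
  have hR : (starRingEnd ℂ) (dFTminus ω (fun x => f x) (-ξ))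
      = ∫ x : ℝ, ((starRingEnd ℂ) (f x) * Psi2 ω x (-ξ) - f x * Psi1 ω x (-ξ)) := by
    rw [dFTminus, ← integral_conj]
    apply integral_congr_ae
    filter_upwards with x
    simp [map_mul, map_sub]
  rw [hL, hR, ← mul_neg, ← integral_neg]
  congr 1
  apply integral_congr_ae
  filter_upwards with x
  ring
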